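/- arXiv:1803.02899 — 2 statements merged into one kernel-verified Lean document; each statement's English description precedes it below -/
import Mathlib

section
/- For a finite category C, the zeta function ζ_C, defined by ζ_C(x,y) = |C(x,y)|, satisfies e_C ζ_C e_C = ζ_C; that is, ζ_C lies in the corner algebra e_C M(C) e_C. -/
open CategoryTheory
open scoped Classical

universe u v

/-- Convolution product on the Möbius algebra of rational-valued functions
on pairs of objects of a finite category. -/
noncomputable def conv (C : Type u) [Category.{v} C] [Fintype C]
    (α β : C → C → ℚ) : C → C → ℚ :=
  fun x y => ∑ z : C, α x z * β z y

/-- The size of the isomorphism class of an object. -/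
noncomputable def isoCard (C : Type u) [Category.{v} C] [Fintype C] (x : C) : ℚ :=
  ((Finset.univ.filter fun z : C => Nonempty (x ≅ z)).card : ℚ)

/-- The idempotent `e_C` : `e_C(x,y) = 1/|[x]|` if `x ≅ y`, and `0` otherwise. -/
noncomputable def eFun (C : Type u) [Category.{v} C] [Fintype C] : C → C → ℚ :=
  fun x y => if Nonempty (x ≅ y) then 1 / isoCard C x else 0

/-- The zeta function of a finite category: `ζ_C(x,y) = |C(x,y)|`. -/
noncomputable def zeta (C : Type u) [Category.{v} C] [Fintype C]
    [∀ x y : C, Fintype (x ⟶ y)] : C → C → ℚ :=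
  fun x y => (Fintype.card (x ⟶ y) : ℚ)

/-- The Kronecker delta, the multiplicative identity of the Möbius algebra. -/
noncomputable def delta (C : Type u) [Category.{v} C] [Fintype C] : C → C → ℚ :=
  fun x y => if x = y then 1 else 0

lemma isoCard_pos (C : Type u) [Category.{v} C] [Fintype C] (x : C) :
    0 < isoCard C x := by
  unfold isoCard
  have : x ∈ Finset.univ.filter fun z : C => Nonempty (x ≅ z) := by
    simp only [Finset.mem_filter, Finset.mem_univ, true_and]
    exact ⟨Iso.refl x⟩
  exact_mod_cast Finset.card_pos.mpr ⟨x, this⟩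

lemma zeta_congr_left (C : Type u) [Category.{v} C] [Fintype C]
    [∀ x y : C, Fintype (x ⟶ y)] {x z : C} (i : x ≅ z) (y : C) :
    zeta C z y = zeta C x y := by
  unfold zeta
  exact congrArg Nat.cast (Fintype.card_congr (Iso.homCongr i.symm (Iso.refl y)))

lemma zeta_congr_right (C : Type u) [Category.{v} C] [Fintype C]
    [∀ x y : C, Fintype (x ⟶ y)] {z y : C} (i : z ≅ y) (x : C) :
    zeta C x z = zeta C x y := by
  unfold zeta
  exact congrArg Nat.cast (Fintype.card_congr (Iso.homCongr (Iso.refl x) i))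

lemma conv_e_left (C : Type u) [Category.{v} C] [Fintype C]
    (α : C → C → ℚ) (h : ∀ {x z : C}, (x ≅ z) → ∀ y, α z y = α x y) :
    conv C (eFun C) α = α := by
  funext x y
  unfold conv eFun
  have step : ∀ z : C, (if Nonempty (x ≅ z) then 1 / isoCard C x else 0) * α z y
      = if Nonempty (x ≅ z) then (1 / isoCard C x) * α x y else 0 := by
    intro z
    split
    · rename_i hz; rw [h (Classical.choice hz) y]
    · simp
  simp_rw [step]
  rw [← Finset.sum_filter, Finset.sum_const, nsmul_eq_mul]
  have hc : ((Finset.univ.filter fun z : C => Nonempty (x ≅ z)).card : ℚ)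
      = isoCard C x := rfl
  rw [hc]
  field_simp [ne_of_gt (isoCard_pos C x)]

lemma conv_e_right (C : Type u) [Category.{v} C] [Fintype C]
    (α : C → C → ℚ) (h : ∀ {z y : C}, (z ≅ y) → ∀ x, α x z = α x y) :
    conv C α (eFun C) = α := by
  funext x y
  unfold conv eFun
  have step : ∀ z : C, α x z * (if Nonempty (z ≅ y) then 1 / isoCard C z else 0)
      = if Nonempty (y ≅ z) then α x y * (1 / isoCard C y) else 0 := by
    intro z
    by_cases hz : Nonempty (z ≅ y)
    · obtain ⟨i⟩ := hz
      have h1 : Nonempty (z ≅ y) := ⟨i⟩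
      have h2 : Nonempty (y ≅ z) := ⟨i.symm⟩
      rw [if_pos h1, if_pos h2, h i x]
      have : isoCard C z = isoCard C y := by
        unfold isoCard
        congr 1
        apply Finset.card_bij (fun a _ => a)
        · intro a ha
          simp only [Finset.mem_filter, Finset.mem_univ, true_and] at *
          exact ⟨i.symm.trans (Classical.choice ha)⟩
        · intro a _ b _ hab; exact hab
        · intro a ha
          simp only [Finset.mem_filter, Finset.mem_univ, true_and] at *
          exact ⟨a, ⟨i.trans (Classical.choice ha)⟩, rfl⟩
      rw [this]
    · have h2 : ¬ Nonempty (y ≅ z) := fun ⟨i⟩ => hz ⟨i.symm⟩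
      rw [if_neg hz, if_neg h2, mul_zero]
  simp_rw [step]
  rw [← Finset.sum_filter, Finset.sum_const, nsmul_eq_mul]
  have hc : ((Finset.univ.filter fun z : C => Nonempty (y ≅ z)).card : ℚ)
      = isoCard C y := rfl
  rw [hc]
  field_simp [ne_of_gt (isoCard_pos C y)]

/-- the zeta function lies in the corner algebra `e_C M(C) e_C`,
i.e. `e_C ζ_C e_C = ζ_C`. -/
theorem zeta_mem_corner (C : Type u) [Category.{v} C] [Fintype C]
    [∀ x y : C, Fintype (x ⟶ y)] :
    conv C (eFun C) (conv C (zeta C) (eFun C)) = zeta C := by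
  rw [conv_e_right C (zeta C) (fun i x => zeta_congr_right C i x),
      conv_e_left C (zeta C) (fun i y => zeta_congr_left C i y)]
end

section
/- A finite category C has skeletal Möbius inversion if and only if any (equivalently, every) skeleton [C] of C has ordinary Möbius inversion, i.e., the zeta function of [C] is invertible in M([C]). -/
open CategoryTheory
open scoped Classical

universe u v

set_option linter.unusedSectionVars false

section Aux

variable {C : Type u} [Category.{v} C] [Fintype C] [∀ x y : C, Fintype (x ⟶ y)]

lemma zeta_inv_left {x x' : C} (h : Nonempty (x ≅ x')) (y : C) :
    zeta C x y = zeta C x' y := by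
  obtain ⟨i⟩ := h
  unfold zeta
  congr 1
  exact Fintype.card_congr
    ⟨fun f => i.inv ≫ f, fun g => i.hom ≫ g, fun f => by simp, fun g => by simp⟩

lemma zeta_inv_right {y y' : C} (h : Nonempty (y ≅ y')) (x : C) :
    zeta C x y = zeta C x y' := by
  obtain ⟨i⟩ := h
  unfold zeta
  congr 1
  exact Fintype.card_congr
    ⟨fun f => f ≫ i.hom, fun g => g ≫ i.inv, fun f => by simp, fun g => by simp⟩

lemma isoClass_eq {x y : C} (h : Nonempty (x ≅ y)) :
    (Finset.univ.filter fun z : C => Nonempty (x ≅ z)) =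
    (Finset.univ.filter fun z : C => Nonempty (y ≅ z)) := by
  obtain ⟨i⟩ := h
  ext z
  simp only [Finset.mem_filter, Finset.mem_univ, true_and]
  exact ⟨fun ⟨f⟩ => ⟨i.symm.trans f⟩, fun ⟨f⟩ => ⟨i.trans f⟩⟩

lemma isoCard_inv {x y : C} (h : Nonempty (x ≅ y)) : isoCard C x = isoCard C y := by
  unfold isoCard; rw [isoClass_eq h]

lemma isoCard_pos_s4 (x : C) : 0 < isoCard C x := by
  unfold isoCard
  have hx : x ∈ Finset.univ.filter fun z : C => Nonempty (x ≅ z) := by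
    simp only [Finset.mem_filter, Finset.mem_univ, true_and]
    exact ⟨Iso.refl x⟩
  exact_mod_cast Finset.card_pos.mpr ⟨x, hx⟩

lemma isoCard_ne (x : C) : isoCard C x ≠ 0 := ne_of_gt (isoCard_pos_s4 x)

lemma eFun_inv_left {x x' : C} (h : Nonempty (x ≅ x')) (y : C) :
    eFun C x y = eFun C x' y := by
  unfold eFun
  rw [isoCard_inv h]
  exact if_congr ⟨fun ⟨f⟩ => ⟨h.some.symm.trans f⟩, fun ⟨f⟩ => ⟨h.some.trans f⟩⟩ rfl rfl

lemma eFun_inv_right {y y' : C} (h : Nonempty (y ≅ y')) (x : C) :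
    eFun C x y = eFun C x y' := by
  unfold eFun
  exact if_congr ⟨fun ⟨f⟩ => ⟨f.trans h.some⟩, fun ⟨f⟩ => ⟨f.trans h.some.symm⟩⟩ rfl rfl

lemma sum_isoClass (u : C) (g : C → ℚ) (hg : ∀ z, Nonempty (u ≅ z) → g z = g u) :
    ∑ z ∈ Finset.univ.filter (fun z : C => Nonempty (u ≅ z)), g z = isoCard C u * g u := by
  rw [Finset.sum_congr rfl (fun z hz => hg z (Finset.mem_filter.mp hz).2),
    Finset.sum_const, nsmul_eq_mul]
  rfl

lemma sum_eq_sum_skeleton (S : Set C)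
    (r : C → C) (hr1 : ∀ x, r x ∈ S) (hr2 : ∀ x, Nonempty (x ≅ r x))
    (hr3 : ∀ x s, s ∈ S → Nonempty (x ≅ s) → s = r x)
    (g : C → ℚ) (hg : ∀ x y, Nonempty (x ≅ y) → g x = g y) :
    ∑ z : C, g z = ∑ u ∈ Finset.univ.filter (· ∈ S), isoCard C u * g u := by
  rw [← Finset.sum_fiberwise_of_maps_to
    (g := r) (fun x _ => Finset.mem_filter.mpr ⟨Finset.mem_univ _, hr1 x⟩) g]
  refine Finset.sum_congr rfl fun u hu => ?_
  have huS : u ∈ S := (Finset.mem_filter.mp hu).2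
  have hfib : (Finset.univ.filter fun z : C => r z = u) =
      (Finset.univ.filter fun z : C => Nonempty (u ≅ z)) := by
    ext z
    simp only [Finset.mem_filter, Finset.mem_univ, true_and]
    constructor
    · rintro rfl; exact ⟨(hr2 z).some.symm⟩
    · intro ⟨f⟩; exact (hr3 z u huS ⟨f.symm⟩).symm
  rw [hfib, sum_isoClass u g (fun z hz => hg z u ⟨hz.some.symm⟩)]

lemma conv_eFun_right (ν : C → C → ℚ)
    (hν : ∀ x y y', Nonempty (y ≅ y') → ν x y = ν x y') :
    conv C ν (eFun C) = ν := by
  funext x y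
  unfold conv eFun
  have key : ∀ z : C, ν x z * (if Nonempty (z ≅ y) then 1 / isoCard C z else 0) =
      if Nonempty (y ≅ z) then ν x y * (1 / isoCard C y) else 0 := by
    intro z
    by_cases h : Nonempty (z ≅ y)
    · have h' : Nonempty (y ≅ z) := ⟨h.some.symm⟩
      rw [if_pos h, if_pos h', hν x z y h, isoCard_inv h]
    · rw [if_neg h, if_neg (fun ⟨f⟩ => h ⟨f.symm⟩), mul_zero]
  rw [Finset.sum_congr rfl (fun z _ => key z), ← Finset.sum_filter,
    Finset.sum_const, nsmul_eq_mul]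
  have : ((Finset.univ.filter fun z : C => Nonempty (y ≅ z)).card : ℚ) = isoCard C y := rfl
  rw [this, mul_comm (ν x y), ← mul_assoc, mul_one_div, div_self (isoCard_ne y), one_mul]

lemma conv_eFun_left (ν : C → C → ℚ)
    (hν : ∀ x x' y, Nonempty (x ≅ x') → ν x y = ν x' y) :
    conv C (eFun C) ν = ν := by
  funext x y
  unfold conv eFun
  have key : ∀ z : C, (if Nonempty (x ≅ z) then 1 / isoCard C x else 0) * ν z y =
      if Nonempty (x ≅ z) then 1 / isoCard C x * ν x y else 0 := by
    intro z
    by_cases h : Nonempty (x ≅ z)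
    · rw [if_pos h, if_pos h, hν z x y ⟨h.some.symm⟩]
    · rw [if_neg h, if_neg h, zero_mul]
  rw [Finset.sum_congr rfl (fun z _ => key z), ← Finset.sum_filter,
    Finset.sum_const, nsmul_eq_mul]
  have : ((Finset.univ.filter fun z : C => Nonempty (x ≅ z)).card : ℚ) = isoCard C x := rfl
  rw [this, ← mul_assoc, mul_one_div, div_self (isoCard_ne x), one_mul]

lemma corner_inv (ν : C → C → ℚ)
    (hcorner : conv C (eFun C) (conv C ν (eFun C)) = ν) :
    (∀ x x' y, Nonempty (x ≅ x') → ν x y = ν x' y) ∧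
    (∀ x y y', Nonempty (y ≅ y') → ν x y = ν x y') := by
  constructor
  · intro x x' y h
    rw [← hcorner]
    unfold conv
    exact Finset.sum_congr rfl fun z _ => by rw [eFun_inv_left h z]
  · intro x y y' h
    rw [← hcorner]
    unfold conv
    refine Finset.sum_congr rfl fun z _ => ?_
    congr 1
    refine Finset.sum_congr rfl fun w _ => ?_
    rw [eFun_inv_right h w]

end Aux

/-- a finite category `C` has skeletal Möbius inversion iff any
(equivalently, every) skeleton `[C]` of `C` (a full subcategory containing
exactly one object from each isomorphism class, here given by its set `S` of
objects) has ordinary Möbius inversion, i.e. the zeta function of the full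
subcategory on `S` is invertible in `M([C])`. -/
theorem skeletal_mobius_iff_skeleton_mobius (C : Type u) [Category.{v} C] [Fintype C]
    [∀ x y : C, Fintype (x ⟶ y)] (S : Set C)
    (hS : ∀ x : C, ∃! s : C, s ∈ S ∧ Nonempty (x ≅ s)) :
    (∃ ν : C → C → ℚ, conv C (eFun C) (conv C ν (eFun C)) = ν ∧
        conv C (zeta C) ν = eFun C ∧ conv C ν (zeta C) = eFun C) ↔
    (∃ μ : C → C → ℚ,
      (∀ x ∈ S, ∀ y ∈ S,
        ∑ z ∈ Finset.univ.filter (· ∈ S), zeta C x z * μ z y = if x = y then 1 else 0) ∧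
      (∀ x ∈ S, ∀ y ∈ S,
        ∑ z ∈ Finset.univ.filter (· ∈ S), μ x z * zeta C z y = if x = y then 1 else 0)) := by
  -- the representative function of a skeleton
  set r : C → C := fun x => (hS x).choose with hrdef
  have hr1 : ∀ x, r x ∈ S := fun x => (hS x).choose_spec.1.1
  have hr2 : ∀ x, Nonempty (x ≅ r x) := fun x => (hS x).choose_spec.1.2
  have hr3 : ∀ x s, s ∈ S → Nonempty (x ≅ s) → s = r x :=
    fun x s h1 h2 => (hS x).choose_spec.2 s ⟨h1, h2⟩
  have hrS : ∀ u, u ∈ S → r u = u := fun u hu => (hr3 u u hu ⟨Iso.refl u⟩).symm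
  have hriso : ∀ x y, Nonempty (x ≅ y) → r x = r y := fun x y h =>
    (hr3 x (r y) (hr1 y) ⟨h.some.trans (hr2 y).some⟩).symm
  have hiso_of_r : ∀ x y, r x = r y → Nonempty (x ≅ y) := fun x y h =>
    ⟨(hr2 x).some.trans ((eqToIso h).trans (hr2 y).some.symm)⟩
  have hSS : ∀ x ∈ S, ∀ y ∈ S, Nonempty (x ≅ y) → x = y := fun x hx y hy h =>
    (hr3 x x hx ⟨Iso.refl x⟩).trans (hr3 x y hy h).symm
  constructor
  · rintro ⟨ν, hcorner, hl, hr⟩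
    obtain ⟨hν1, hν2⟩ := corner_inv ν hcorner
    obtain ⟨μ, hμdef⟩ : ∃ μ : C → C → ℚ,
        μ = fun s t => isoCard C s * isoCard C t * ν s t := ⟨_, rfl⟩
    have hμval : ∀ s t, μ s t = isoCard C s * isoCard C t * ν s t := fun s t => by
      rw [hμdef]
    refine ⟨μ, ?_, ?_⟩
    · intro x hx y hy
      have hg : ∀ a b : C, Nonempty (a ≅ b) →
          zeta C x a * ν a y = zeta C x b * ν b y := fun a b h => by
        rw [zeta_inv_right h x, hν1 a b y h]
      have hsum := sum_eq_sum_skeleton S r hr1 hr2 hr3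
        (fun z => zeta C x z * ν z y) hg
      have hconv : (∑ z : C, zeta C x z * ν z y) = eFun C x y := by
        have := congrFun (congrFun hl x) y
        simpa [conv] using this
      have step : ∀ z ∈ Finset.univ.filter (· ∈ S), zeta C x z * μ z y =
          isoCard C y * (isoCard C z * (zeta C x z * ν z y)) := fun z _ => by
        rw [hμval]; ring
      rw [Finset.sum_congr rfl step, ← Finset.mul_sum, ← hsum, hconv]
      by_cases hxy : x = y
      · subst hxy
        rw [if_pos rfl]
        unfold eFun
        rw [if_pos ⟨Iso.refl x⟩, mul_one_div, div_self (isoCard_ne x)]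
      · rw [if_neg hxy]
        unfold eFun
        rw [if_neg (fun h => hxy (hSS x hx y hy h)), mul_zero]
    · intro x hx y hy
      have hg : ∀ a b : C, Nonempty (a ≅ b) →
          ν x a * zeta C a y = ν x b * zeta C b y := fun a b h => by
        rw [zeta_inv_left h y, hν2 x a b h]
      have hsum := sum_eq_sum_skeleton S r hr1 hr2 hr3
        (fun z => ν x z * zeta C z y) hg
      have hconv : (∑ z : C, ν x z * zeta C z y) = eFun C x y := by
        have := congrFun (congrFun hr x) y
        simpa [conv] using this
      have step : ∀ z ∈ Finset.univ.filter (· ∈ S), μ x z * zeta C z y =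
          isoCard C x * (isoCard C z * (ν x z * zeta C z y)) := fun z _ => by
        rw [hμval]; ring
      rw [Finset.sum_congr rfl step, ← Finset.mul_sum, ← hsum, hconv]
      by_cases hxy : x = y
      · subst hxy
        rw [if_pos rfl]
        unfold eFun
        rw [if_pos ⟨Iso.refl x⟩, mul_one_div, div_self (isoCard_ne x)]
      · rw [if_neg hxy]
        unfold eFun
        rw [if_neg (fun h => hxy (hSS x hx y hy h)), mul_zero]
  · rintro ⟨μ, hμ1, hμ2⟩
    obtain ⟨ν, hνdef⟩ : ∃ ν : C → C → ℚ,
        ν = fun x y => μ (r x) (r y) * (isoCard C x)⁻¹ * (isoCard C y)⁻¹ := ⟨_, rfl⟩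
    have hνval : ∀ x y, ν x y = μ (r x) (r y) * (isoCard C x)⁻¹ * (isoCard C y)⁻¹ :=
      fun x y => by rw [hνdef]
    have hν1 : ∀ x x' y, Nonempty (x ≅ x') → ν x y = ν x' y := fun x x' y h => by
      rw [hνval, hνval, hriso x x' h, isoCard_inv h]
    have hν2 : ∀ x y y', Nonempty (y ≅ y') → ν x y = ν x y' := fun x y y' h => by
      rw [hνval, hνval, hriso y y' h, isoCard_inv h]
    refine ⟨ν, ?_, ?_, ?_⟩
    · rw [conv_eFun_right ν hν2]
      exact conv_eFun_left ν hν1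
    · funext x y
      have hg : ∀ a b : C, Nonempty (a ≅ b) →
          zeta C x a * ν a y = zeta C x b * ν b y := fun a b h => by
        rw [zeta_inv_right h x, hν1 a b y h]
      have hsum := sum_eq_sum_skeleton S r hr1 hr2 hr3
        (fun z => zeta C x z * ν z y) hg
      have hLHS : conv C (zeta C) ν x y =
          ∑ u ∈ Finset.univ.filter (· ∈ S), isoCard C u * (zeta C x u * ν u y) := hsum
      rw [hLHS]
      have step : ∀ u ∈ Finset.univ.filter (· ∈ S),
          isoCard C u * (zeta C x u * ν u y) =
          zeta C (r x) u * μ u (r y) * (isoCard C y)⁻¹ := by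
        intro u hu
        have huS : u ∈ S := (Finset.mem_filter.mp hu).2
        rw [hνval, hrS u huS, zeta_inv_left (hr2 x) u]
        field_simp
        rw [mul_assoc, mul_div_mul_left _ _ (isoCard_ne u)]
      rw [Finset.sum_congr rfl step, ← Finset.sum_mul,
        hμ1 (r x) (hr1 x) (r y) (hr1 y)]
      unfold eFun
      by_cases h : Nonempty (x ≅ y)
      · rw [if_pos (hriso x y h), if_pos h, one_mul, one_div, isoCard_inv h]
      · rw [if_neg (fun he => h (hiso_of_r x y he)), if_neg h, zero_mul]
    · funext x y
      have hg : ∀ a b : C, Nonempty (a ≅ b) →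
          ν x a * zeta C a y = ν x b * zeta C b y := fun a b h => by
        rw [zeta_inv_left h y, hν2 x a b h]
      have hsum := sum_eq_sum_skeleton S r hr1 hr2 hr3
        (fun z => ν x z * zeta C z y) hg
      have hLHS : conv C ν (zeta C) x y =
          ∑ u ∈ Finset.univ.filter (· ∈ S), isoCard C u * (ν x u * zeta C u y) := hsum
      rw [hLHS]
      have step : ∀ u ∈ Finset.univ.filter (· ∈ S),
          isoCard C u * (ν x u * zeta C u y) =
          (isoCard C x)⁻¹ * (μ (r x) u * zeta C u (r y)) := by
        intro u hu
        have huS : u ∈ S := (Finset.mem_filter.mp hu).2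
        rw [hνval, hrS u huS, zeta_inv_right (hr2 y) u]
        field_simp
        rw [mul_assoc, mul_div_mul_left _ _ (isoCard_ne u)]
      rw [Finset.sum_congr rfl step, ← Finset.mul_sum,
        hμ2 (r x) (hr1 x) (r y) (hr1 y)]
      unfold eFun
      by_cases h : Nonempty (x ≅ y)
      · rw [if_pos (hriso x y h), if_pos h, mul_one, one_div]
      · rw [if_neg (fun he => h (hiso_of_r x y he)), if_neg h, mul_zero]
end
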